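/- Let φ be the rank-m Drinfeld F_q[T]-module of characteristic T−1 with φ_T = −τ^m + g·τ^j + 1, where g = (x^{q^m} − x)/x^{q^j} for a nonzero T-torsion point x (i.e., −x^{q^m} + g·x^{q^j} + x = 0), and let k = m − j. Then λ = τ^k − x^{q^k−1} ∈ L{τ} satisfies λ·φ_T = ψ_T·λ where ψ_T = −τ^m + h·τ^j + 1 with h = (x^{q^m} − x)/x^{q^m − q^k + 1}; i.e., λ is an isogeny from φ to ψ. -/
import Mathlib


open Polynomial

/-- **The BBGS isogeny of Drinfeld modules.**
Let `φ` be the rank-`m` Drinfeld `F_q[T]`-module of characteristic `T − 1` with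
`φ_T = −τ^m + g·τ^j + 1`, where `g = (x^{q^m} − x)/x^{q^j}` for a nonzero `T`-torsion
point `x` (so `−x^{q^m} + g·x^{q^j} + x = 0`), and let `k = m − j`.  Identifying an
element `∑ aᵢ τ^i` of the twisted polynomial ring `L{τ}` with the additive polynomial
`∑ aᵢ X^{q^i} ∈ L[X]` (so that multiplication in `L{τ}` becomes composition of
polynomials), the element `λ = τ^k − x^{q^k − 1}` satisfies `λ·φ_T = ψ_T·λ`, where
`ψ_T = −τ^m + h·τ^j + 1` and `h = (x^{q^m} − x)/x^{q^m − q^k + 1}`; i.e. `λ` is an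
isogeny from `φ` to `ψ`. -/
theorem bbgs_drinfeld_isogeny (p s q m j k : ℕ) (hp : p.Prime) (hs : 0 < s)
    (hq : q = p ^ s) (hj : 0 < j) (hjm : j ≤ m) (hcop : Nat.gcd m j = 1)
    (hk : k = m - j)
    (L : Type*) [Field L] [CharP L p]
    (x : L) (hx : x ≠ 0)
    (g h : L)
    (hg : g = (x ^ q ^ m - x) / x ^ q ^ j)
    (hh : h = (x ^ q ^ m - x) / x ^ (q ^ m - q ^ k + 1))
    (htors : -x ^ q ^ m + g * x ^ q ^ j + x = 0) :
    (X ^ q ^ k - C (x ^ (q ^ k - 1)) * X : L[X]).comp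
        (-X ^ q ^ m + C g * X ^ q ^ j + X) =
      (-X ^ q ^ m + C h * X ^ q ^ j + X : L[X]).comp
        (X ^ q ^ k - C (x ^ (q ^ k - 1)) * X) := by
  haveI : Fact p.Prime := ⟨hp⟩
  -- general Frobenius identities
  have hsubL : ∀ (n : ℕ) (z w : L), (z - w) ^ q ^ n = z ^ q ^ n - w ^ q ^ n := by
    intro n z w; rw [hq, ← pow_mul]; exact sub_pow_char_pow z w (s * n)
  have hsubP : ∀ (n : ℕ) (z w : L[X]), (z - w) ^ q ^ n = z ^ q ^ n - w ^ q ^ n := by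
    intro n z w; rw [hq, ← pow_mul]; exact sub_pow_char_pow z w (s * n)
  have haddP : ∀ (n : ℕ) (z w : L[X]), (z + w) ^ q ^ n = z ^ q ^ n + w ^ q ^ n := by
    intro n z w; rw [hq, ← pow_mul]; exact add_pow_char_pow z w p (s * n)
  set a := q ^ k with ha
  set b := q ^ m with hb
  set d := q ^ j with hd
  set c := x ^ (a - 1) with hc
  -- numeric facts
  have hq2 : 2 ≤ q := by
    subst hq
    calc 2 ≤ p := hp.two_le
    _ ≤ p ^ s := Nat.le_self_pow hs.ne' p
  have ha1 : 1 ≤ a := Nat.one_le_pow _ _ (by omega)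
  have hjk : j + k = m := by omega
  have hda : d * a = b := by rw [ha, hb, hd, ← pow_add, hjk]
  have hab : a ≤ b := Nat.pow_le_pow_right (by omega) (by omega)
  -- nonvanishing
  have hxp : ∀ n : ℕ, x ^ n ≠ 0 := fun n => pow_ne_zero n hx
  -- product forms of g, h
  have hgx : g * x ^ d = x ^ b - x := by rw [hg]; field_simp
  have hhx : h * x ^ (b - a + 1) = x ^ b - x := by rw [hh]; field_simp
  -- power identities for c
  have hcx : c * x = x ^ a := by rw [hc, ← pow_succ]; congr 1; omega
  have hc2 : c * x ^ (b - a + 1) = x ^ b := by rw [hc, ← pow_add]; congr 1; omega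
  have hc3 : c ^ d * x ^ d = x ^ b := by
    rw [hc, ← pow_mul, ← pow_add]; congr 1
    have h1 : 1 * d ≤ a * d := Nat.mul_le_mul_right d ha1
    have h2 : a * d = b := by rw [mul_comm]; exact hda
    have h3 := Nat.sub_mul a 1 d
    omega
  have hc4 : c ^ b * x ^ b = x ^ (a * b) := by
    rw [hc, ← pow_mul, ← pow_add]; congr 1
    have h1 : 1 * b ≤ a * b := Nat.mul_le_mul_right b ha1
    have h3 := Nat.sub_mul a 1 b
    omega
  have hc5 : x ^ b * x = x ^ (b - a + 1) * x ^ a := by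
    rw [← pow_succ, ← pow_add]; congr 1; omega
  -- frobenius on g relation
  have hga : g ^ a * x ^ b = x ^ (a * b) - x ^ a := by
    have h0 : (g * x ^ d) ^ a = (x ^ b - x) ^ a := by rw [hgx]
    rw [mul_pow, ← pow_mul, hda, hsubL k, ← pow_mul, mul_comm b a] at h0
    exact h0
  -- scalar identities
  have e2 : g * c = h * c ^ d := by
    have key : g * c * (x ^ d * x ^ (b - a + 1)) = h * c ^ d * (x ^ d * x ^ (b - a + 1)) := by
      linear_combination (c * x ^ (b - a + 1)) * hgx + (x ^ b - x) * hc2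
        - (x ^ b - x) * hc3 - c ^ d * x ^ d * hhx
    exact mul_right_cancel₀ (mul_ne_zero (hxp d) (hxp _)) key
  have e1 : g ^ a + c - c ^ b = h := by
    have key : (g ^ a + c - c ^ b) * (x ^ b * x) = h * (x ^ b * x) := by
      linear_combination x * hga + x ^ b * hcx - x * hc4 - x ^ a * hhx - h * hc5
    exact mul_right_cancel₀ (mul_ne_zero (hxp b) hx) key
  -- lift to polynomials
  have E1 : (C g) ^ a + C c - (C c) ^ b = C h := by
    rw [← C_pow, ← C_pow, ← C_add, ← C_sub, e1]
  have E2 : C g * C c = C h * (C c) ^ d := by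
    rw [← C_pow, ← C_mul, ← C_mul, e2]
  -- expand compositions
  have expand : (-X ^ b + C g * X ^ d + X : L[X]) ^ a
      = -X ^ (a * b) + C g ^ a * X ^ b + X ^ a := by
    have h0 : (-X ^ b + C g * X ^ d + X : L[X]) = (C g * X ^ d + X) - X ^ b := by ring
    rw [h0, hsubP k, haddP k, mul_pow, ← pow_mul, ← pow_mul, hda, mul_comm b a]
    ring
  have expand2 : (X ^ a - C c * X : L[X]) ^ b
      = X ^ (a * b) - C c ^ b * X ^ b := by
    rw [hsubP m, mul_pow, ← pow_mul, ← hb]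
  have expand3 : (X ^ a - C c * X : L[X]) ^ d
      = X ^ b - C c ^ d * X ^ d := by
    rw [hsubP j, mul_pow, ← pow_mul, ← hd, mul_comm a d, hda]
  simp only [comp, eval₂_add, eval₂_sub, eval₂_neg, eval₂_mul, eval₂_pow, eval₂_X, eval₂_C]
  rw [expand, expand2, expand3]
  linear_combination (X : L[X]) ^ b * E1 - (X : L[X]) ^ d * E2
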